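/- Enhancement Young diagrams (R, C) span for the zero-set Z under enhanced growth if and only if Z ⊆ R ⊞ C. -/

import Mathlib

def IsYoung (S : Set (ℕ × ℕ)) : Prop :=
  ∀ p q : ℕ × ℕ, q ∈ S → p.1 ≤ q.1 → p.2 ≤ q.2 → p ∈ S

/-- Number of points of `A` on the horizontal line through `p`. -/
noncomputable def rowCount (A : Set (ℕ × ℕ)) (p : ℕ × ℕ) : ℕ :=
  {k : ℕ | (k, p.2) ∈ A}.ncard

/-- Number of points of `A` on the vertical line through `p`. -/
noncomputable def colCount (A : Set (ℕ × ℕ)) (p : ℕ × ℕ) : ℕ :=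
  {k : ℕ | (p.1, k) ∈ A}.ncard

/-- Enhanced neighborhood growth transformation with zero-set `Z` and
enhancements `r` (row) and `c` (column). -/
noncomputable def Ten (Z : Set (ℕ × ℕ)) (r c : ℕ → ℕ) (A : Set (ℕ × ℕ)) :
    Set (ℕ × ℕ) :=
  A ∪ {p | (rowCount A p + r p.2, colCount A p + c p.1) ∉ Z}

open Pointwise in
def boxSum (X Y : Set (ℕ × ℕ)) : Set (ℕ × ℕ) := (Xᶜ + Yᶜ)ᶜ

lemma ncard_Iio (n : ℕ) : (Set.Iio n).ncard = n := by
  rw [← Finset.coe_Iio, Set.ncard_coe_finset, Nat.card_Iio]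

lemma Ten_supset (Z : Set (ℕ × ℕ)) (r c : ℕ → ℕ) (A : Set (ℕ × ℕ)) :
    A ⊆ Ten Z r c A := Set.subset_union_left

lemma Ten_iter_mono (Z : Set (ℕ × ℕ)) (r c : ℕ → ℕ) :
    Monotone (fun t => (Ten Z r c)^[t] (∅ : Set (ℕ × ℕ))) := by
  apply monotone_nat_of_le_succ
  intro t
  rw [Function.iterate_succ_apply']
  exact Ten_supset _ _ _ _

/-- A row through a point not in a Young set is finite. -/
lemma row_finite_of_not_mem (A : Set (ℕ × ℕ)) (hA : IsYoung A) (p : ℕ × ℕ)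
    (hp : p ∉ A) : {k : ℕ | (k, p.2) ∈ A}.Finite := by
  rw [← Set.not_infinite]
  intro h
  obtain ⟨k, hk, hk2⟩ := Set.Infinite.exists_gt h p.1
  exact hp (hA p (k, p.2) hk (le_of_lt hk2) le_rfl)

lemma col_finite_of_not_mem (A : Set (ℕ × ℕ)) (hA : IsYoung A) (p : ℕ × ℕ)
    (hp : p ∉ A) : {k : ℕ | (p.1, k) ∈ A}.Finite := by
  rw [← Set.not_infinite]
  intro h
  obtain ⟨k, hk, hk2⟩ := Set.Infinite.exists_gt h p.2
  exact hp (hA p (p.1, k) hk le_rfl (le_of_lt hk2))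

/-- `Ten` preserves the Young property. -/
lemma isYoung_Ten (Z : Set (ℕ × ℕ)) (hZ : IsYoung Z) (r c : ℕ → ℕ)
    (hr : Antitone r) (hc : Antitone c) (A : Set (ℕ × ℕ)) (hA : IsYoung A) :
    IsYoung (Ten Z r c A) := by
  intro p q hq h1 h2
  rcases hq with hq | hq
  · exact Or.inl (hA p q hq h1 h2)
  · by_cases hpA : p ∈ A
    · exact Or.inl hpA
    right
    simp only [Set.mem_setOf_eq] at hq ⊢
    intro hmem
    apply hq
    have hrowsub : {k : ℕ | (k, q.2) ∈ A} ⊆ {k : ℕ | (k, p.2) ∈ A} := by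
      intro k hk
      exact hA (k, p.2) (k, q.2) hk le_rfl h2
    have hcolsub : {k : ℕ | (q.1, k) ∈ A} ⊆ {k : ℕ | (p.1, k) ∈ A} := by
      intro k hk
      exact hA (p.1, k) (q.1, k) hk h1 le_rfl
    have h3 : rowCount A q ≤ rowCount A p :=
      Set.ncard_le_ncard hrowsub (row_finite_of_not_mem A hA p hpA)
    have h4 : colCount A q ≤ colCount A p :=
      Set.ncard_le_ncard hcolsub (col_finite_of_not_mem A hA p hpA)
    exact hZ _ _ hmem (Nat.add_le_add h3 (hr h2)) (Nat.add_le_add h4 (hc h1))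

lemma isYoung_iter (Z : Set (ℕ × ℕ)) (hZ : IsYoung Z) (r c : ℕ → ℕ)
    (hr : Antitone r) (hc : Antitone c) (t : ℕ) :
    IsYoung ((Ten Z r c)^[t] ∅) := by
  induction t with
  | zero => intro p q hq _ _; exact absurd hq (Set.notMem_empty q)
  | succ t ih =>
    rw [Function.iterate_succ_apply']
    exact isYoung_Ten Z hZ r c hr hc _ ih

lemma exists_iter_of_forall_lt (Z : Set (ℕ × ℕ)) (r c : ℕ → ℕ) (g : ℕ → ℕ × ℕ)
    (m : ℕ) (h : ∀ k < m, ∃ t, g k ∈ (Ten Z r c)^[t] ∅) :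
    ∃ t, ∀ k < m, g k ∈ (Ten Z r c)^[t] ∅ := by
  induction m with
  | zero => exact ⟨0, fun k hk => absurd hk (Nat.not_lt_zero k)⟩
  | succ m ih =>
    obtain ⟨t, ht⟩ := ih (fun k hk => h k (hk.trans (Nat.lt_succ_self m)))
    obtain ⟨s, hs⟩ := h m (Nat.lt_succ_self m)
    refine ⟨max t s, fun k hk => ?_⟩
    rcases Nat.lt_succ_iff_lt_or_eq.mp hk with h' | h'
    · exact Ten_iter_mono Z r c (le_max_left t s) (ht k h')
    · subst h'; exact Ten_iter_mono Z r c (le_max_right t s) hs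

open Pointwise in
theorem enhanced_spans_iff_boxSum (Z : Set (ℕ × ℕ)) (hZfin : Z.Finite)
    (hZ : IsYoung Z) (r c : ℕ → ℕ) (hr : Antitone r) (hc : Antitone c)
    (hrfin : {j | r j ≠ 0}.Finite) (hcfin : {i | c i ≠ 0}.Finite) :
    (∀ p : ℕ × ℕ, ∃ t, p ∈ (Ten Z r c)^[t] ∅) ↔
      Z ⊆ boxSum {p : ℕ × ℕ | p.1 < r p.2} {p : ℕ × ℕ | p.2 < c p.1} := by
  classical
  constructor
  · -- spanning → Z ⊆ boxSum
    intro hspan z hz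
    by_contra hzb
    have hz2 : z ∈ ({p : ℕ × ℕ | p.1 < r p.2}ᶜ + {p : ℕ × ℕ | p.2 < c p.1}ᶜ) := by
      simpa [boxSum] using hzb
    obtain ⟨a, ha, b, hb, hab⟩ := Set.mem_add.mp hz2
    simp only [Set.mem_compl_iff, Set.mem_setOf_eq, not_lt] at ha hb
    -- the quadrant `{q | b.1 ≤ q.1 ∧ a.2 ≤ q.2}` is never infected
    have key : ∀ t, ∀ q : ℕ × ℕ, q ∈ (Ten Z r c)^[t] ∅ → q.1 < b.1 ∨ q.2 < a.2 := by
      intro t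
      induction t with
      | zero => intro q hq; exact absurd hq (Set.notMem_empty q)
      | succ t ih =>
        intro q hq
        rw [Function.iterate_succ_apply'] at hq
        by_contra hcon
        push_neg at hcon
        obtain ⟨h1, h2⟩ := hcon
        rcases hq with hq | hq
        · rcases ih q hq with h | h
          · omega
          · omega
        · simp only [Set.mem_setOf_eq] at hq
          apply hq
          apply hZ _ z hz
          · -- first coordinate
            have hsub : {k : ℕ | (k, q.2) ∈ (Ten Z r c)^[t] ∅} ⊆ Set.Iio b.1 := by
              intro k hk
              rcases ih (k, q.2) hk with h | h
              · exact h
              · exact absurd h2 (by simpa using h.not_ge)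
            have hrc : rowCount ((Ten Z r c)^[t] ∅) q ≤ b.1 := by
              calc rowCount ((Ten Z r c)^[t] ∅) q
                  ≤ (Set.Iio b.1).ncard := Set.ncard_le_ncard hsub (Set.finite_Iio _)
                _ = b.1 := ncard_Iio _
            have hz1 : z.1 = a.1 + b.1 := by rw [← hab]; rfl
            have : r q.2 ≤ a.1 := le_trans (hr h2) ha
            simp only [hz1]
            omega
          · -- second coordinate
            have hsub : {k : ℕ | (q.1, k) ∈ (Ten Z r c)^[t] ∅} ⊆ Set.Iio a.2 := by
              intro k hk
              rcases ih (q.1, k) hk with h | h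
              · exact absurd h1 (by simpa using h.not_ge)
              · exact h
            have hcc : colCount ((Ten Z r c)^[t] ∅) q ≤ a.2 := by
              calc colCount ((Ten Z r c)^[t] ∅) q
                  ≤ (Set.Iio a.2).ncard := Set.ncard_le_ncard hsub (Set.finite_Iio _)
                _ = a.2 := ncard_Iio _
            have hz2' : z.2 = a.2 + b.2 := by rw [← hab]; rfl
            have : c q.1 ≤ b.2 := le_trans (hc h1) hb
            simp only [hz2']
            omega
    obtain ⟨t, ht⟩ := hspan (b.1, a.2)
    rcases key t _ ht with h | h
    · exact absurd h (lt_irrefl _)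
    · exact absurd h (lt_irrefl _)
  · -- Z ⊆ boxSum → spanning
    intro hsub
    by_contra hspan
    push_neg at hspan
    obtain ⟨p₀, hp₀⟩ := hspan
    set F : Set (ℕ × ℕ) := ⋃ t, (Ten Z r c)^[t] ∅ with hFdef
    have hFY : IsYoung F := by
      intro p q hq h1 h2
      obtain ⟨t, ht⟩ := Set.mem_iUnion.mp hq
      exact Set.mem_iUnion.mpr ⟨t, isYoung_iter Z hZ r c hr hc t p q ht h1 h2⟩
    have hp₀F : p₀ ∉ F := by
      intro h
      obtain ⟨t, ht⟩ := Set.mem_iUnion.mp h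
      exact hp₀ t ht
    -- choose a point outside F with minimal coordinate sum
    have hex : ∃ n, ∃ p : ℕ × ℕ, p ∉ F ∧ p.1 + p.2 = n := ⟨p₀.1 + p₀.2, p₀, hp₀F, rfl⟩
    obtain ⟨p, hpF, hpn⟩ := Nat.find_spec hex
    have hmin : ∀ q : ℕ × ℕ, q.1 + q.2 < Nat.find hex → q ∈ F := by
      intro q hq
      by_contra hqF
      have h1 : Nat.find hex ≤ q.1 + q.2 := Nat.find_le ⟨q, hqF, rfl⟩
      omega
    have hrowF : {k : ℕ | (k, p.2) ∈ F} = Set.Iio p.1 := by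
      ext k
      simp only [Set.mem_setOf_eq, Set.mem_Iio]
      constructor
      · intro hk
        by_contra h
        push_neg at h
        exact hpF (hFY p (k, p.2) hk h le_rfl)
      · intro hk
        have hk' : k + p.2 < Nat.find hex := by omega
        exact hmin (k, p.2) hk'
    have hcolF : {k : ℕ | (p.1, k) ∈ F} = Set.Iio p.2 := by
      ext k
      simp only [Set.mem_setOf_eq, Set.mem_Iio]
      constructor
      · intro hk
        by_contra h
        push_neg at h
        exact hpF (hFY p (p.1, k) hk le_rfl h)
      · intro hk
        have hk' : p.1 + k < Nat.find hex := by omega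
        exact hmin (p.1, k) hk'
    -- realize the row and column of F through p at a finite stage
    have memF : ∀ q : ℕ × ℕ, q ∈ F → ∃ t, q ∈ (Ten Z r c)^[t] ∅ :=
      fun q hq => Set.mem_iUnion.mp hq
    obtain ⟨t₁, ht₁⟩ := exists_iter_of_forall_lt Z r c (fun k => (k, p.2)) p.1
      (fun k hk => memF (k, p.2) (by rw [← Set.mem_Iio, ← hrowF] at hk; exact hk))
    obtain ⟨t₂, ht₂⟩ := exists_iter_of_forall_lt Z r c (fun k => (p.1, k)) p.2
      (fun k hk => memF (p.1, k) (by rw [← Set.mem_Iio, ← hcolF] at hk; exact hk))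
    set t := max t₁ t₂ with htdef
    set A : Set (ℕ × ℕ) := (Ten Z r c)^[t] ∅ with hAdef
    have hAF : A ⊆ F := Set.subset_iUnion (fun s => (Ten Z r c)^[s] ∅) t
    have hrowA : {k : ℕ | (k, p.2) ∈ A} = Set.Iio p.1 := by
      apply Set.Subset.antisymm
      · intro k hk
        rw [← hrowF]
        exact hAF hk
      · intro k hk
        exact Ten_iter_mono Z r c (le_max_left t₁ t₂) (ht₁ k hk)
    have hcolA : {k : ℕ | (p.1, k) ∈ A} = Set.Iio p.2 := by
      apply Set.Subset.antisymm
      · intro k hk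
        rw [← hcolF]
        exact hAF hk
      · intro k hk
        exact Ten_iter_mono Z r c (le_max_right t₁ t₂) (ht₂ k hk)
    have hrcA : rowCount A p = p.1 := by rw [rowCount, hrowA, ncard_Iio]
    have hccA : colCount A p = p.2 := by rw [colCount, hcolA, ncard_Iio]
    have hpA1 : p ∉ (Ten Z r c)^[t + 1] ∅ := by
      intro h
      exact hpF (Set.mem_iUnion.mpr ⟨t + 1, h⟩)
    rw [Function.iterate_succ_apply'] at hpA1
    have hpZ : (p.1 + r p.2, p.2 + c p.1) ∈ Z := by
      by_contra h
      exact hpA1 (Or.inr (by show (rowCount A p + r p.2, colCount A p + c p.1) ∉ Z; rw [hrcA, hccA]; exact h))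
    -- contradiction with Z ⊆ boxSum
    have := hsub hpZ
    rw [boxSum, Set.mem_compl_iff] at this
    apply this
    refine Set.mem_add.mpr ⟨(r p.2, p.2), ?_, (p.1, c p.1), ?_, ?_⟩
    · simp only [Set.mem_compl_iff, Set.mem_setOf_eq, not_lt]
      exact le_rfl
    · simp only [Set.mem_compl_iff, Set.mem_setOf_eq, not_lt]
      exact le_rfl
    · simp [Prod.ext_iff]; omega
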